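/- arXiv:1405.6630 — 8 statements merged into one kernel-verified Lean document; each statement's English description precedes it below -/
import Mathlib

section
/- In a single-peaked election whose number of voters is odd, there exists a Condorcet winner (a candidate who beats every other candidate in a strict pairwise majority). -/
open Finset

/-- Any nonempty finite set with a total transitive relation has a top element. -/
lemma exists_top_finset {C : Type*} (r : C → C → Prop)
    (htot : ∀ a b : C, a ≠ b → r a b ∨ r b a)
    (htr : ∀ a b c : C, r a b → r b c → r a c)
    (s : Finset C) (hs : s.Nonempty) :
    ∃ m ∈ s, ∀ c ∈ s, c ≠ m → r m c := by
  classical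
  induction s using Finset.induction_on with
  | empty => exact absurd hs (by simp)
  | @insert a t ha ih =>
    rcases t.eq_empty_or_nonempty with rfl | ht
    · exact ⟨a, by simp, by simp⟩
    · obtain ⟨m, hm, hmtop⟩ := ih ht
      have hne : a ≠ m := fun h => ha (h ▸ hm)
      rcases htot a m hne with hr | hr
      · refine ⟨a, Finset.mem_insert_self _ _, ?_⟩
        intro c hc hca
        rcases Finset.mem_insert.1 hc with rfl | hct
        · exact absurd rfl hca
        · by_cases hcm : c = m
          · exact hcm ▸ hr
          · exact htr _ _ _ hr (hmtop c hct hcm)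
      · refine ⟨m, Finset.mem_insert_of_mem hm, ?_⟩
        intro c hc hcm
        rcases Finset.mem_insert.1 hc with rfl | hct
        · exact hr
        · exact hmtop c hct hcm

/-- In a single-peaked election with an odd number of voters there is a Condorcet winner. -/
theorem exists_condorcet_winner_of_singlePeaked_odd {C ι : Type*}
    [Fintype C] [Nonempty C] [LinearOrder C]
    (voters : Finset ι) (pref : ι → C → C → Prop)
    [∀ v a b, Decidable (pref v a b)]
    (hasym : ∀ v ∈ voters, ∀ a b : C, pref v a b → ¬ pref v b a)
    (htotal : ∀ v ∈ voters, ∀ a b : C, a ≠ b → pref v a b ∨ pref v b a)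
    (htrans : ∀ v ∈ voters, ∀ a b c : C, pref v a b → pref v b c → pref v a c)
    (hsp : ∀ v ∈ voters, ∀ a b c : C,
      ((a < b ∧ b < c) ∨ (c < b ∧ b < a)) → pref v a b → pref v b c)
    (hodd : Odd voters.card) :
    ∃ w : C, ∀ c' ≠ w,
      (voters.filter (fun v => pref v w c')).card >
        (voters.filter (fun v => pref v c' w)).card := by
  classical
  set n := voters.card with hn
  have hn1 : 1 ≤ n := by
    obtain ⟨k, hk⟩ := hodd; omega
  -- peaks
  have hpeakex : ∀ v ∈ voters, ∃ m : C, ∀ c : C, c ≠ m → pref v m c := by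
    intro v hv
    obtain ⟨m, _, hm⟩ := exists_top_finset (pref v) (htotal v hv) (htrans v hv)
      Finset.univ Finset.univ_nonempty
    exact ⟨m, fun c hc => hm c (Finset.mem_univ c) hc⟩
  set peak : ι → C := fun v =>
    if h : ∃ m : C, ∀ c : C, c ≠ m → pref v m c then h.choose
    else Classical.arbitrary C with hpeakdef
  have hpeak : ∀ v ∈ voters, ∀ c : C, c ≠ peak v → pref v (peak v) c := by
    intro v hv c hc
    have h := hpeakex v hv
    simp only [hpeakdef, dif_pos h] at hc ⊢
    exact h.choose_spec c hc
  -- the set of candidates with a strict majority of peaks weakly to their left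
  set P : Finset C := Finset.univ.filter
    (fun x : C => n < 2 * (voters.filter (fun v => peak v ≤ x)).card) with hP
  have hPne : P.Nonempty := by
    refine ⟨Finset.univ.max' Finset.univ_nonempty, ?_⟩
    simp only [hP, Finset.mem_filter, Finset.mem_univ, true_and]
    have : voters.filter (fun v => peak v ≤ Finset.univ.max' Finset.univ_nonempty) = voters := by
      apply Finset.filter_true_of_mem
      intro v _
      exact Finset.le_max' _ _ (Finset.mem_univ _)
    rw [this]; omega
  set w : C := P.min' hPne with hw
  have hwP : n < 2 * (voters.filter (fun v => peak v ≤ w)).card := by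
    have h : w ∈ P := P.min'_mem hPne
    rw [hP, Finset.mem_filter] at h
    exact h.2
  have hwmin : ∀ x : C, x < w → 2 * (voters.filter (fun v => peak v ≤ x)).card ≤ n := by
    intro x hx
    by_contra h
    push_neg at h
    have : x ∈ P := by simp [hP, h]
    exact absurd (P.min'_le x this) (not_le.2 hx)
  -- also a strict majority of peaks weakly to the right of w
  have hright : n < 2 * (voters.filter (fun v => w ≤ peak v)).card := by
    have hx : voters.filter (fun v => ¬ w ≤ peak v)
        = voters.filter (fun v => peak v < w) := by
      apply Finset.filter_congr
      intro v _
      simp [not_le]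
    have hsplit := Finset.card_filter_add_card_filter_not
      (s := voters) (p := fun v => w ≤ peak v)
    rw [hx, ← hn] at hsplit
    set T := voters.filter (fun v => peak v < w) with hT
    have hTsmall : 2 * T.card < n := by
      rcases T.eq_empty_or_nonempty with hTe | hTne
      · rw [hTe]; simpa using Nat.lt_of_lt_of_le Nat.zero_lt_one hn1
      · have hIne : (T.image peak).Nonempty := hTne.image _
        set x := (T.image peak).max' hIne with hx
        have hxw : x < w := by
          obtain ⟨v, hv, hvx⟩ := Finset.mem_image.1 ((T.image peak).max'_mem hIne)
          have h2 := (Finset.mem_filter.1 hv).2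
          rw [hx]
          exact hvx ▸ h2
        have hsub : T ⊆ voters.filter (fun v => peak v ≤ x) := by
          intro v hv
          refine Finset.mem_filter.2 ⟨(Finset.mem_filter.1 hv).1, ?_⟩
          exact Finset.le_max' _ _ (Finset.mem_image_of_mem peak hv)
        have h1 := Finset.card_le_card hsub
        have h2 := hwmin x hxw
        obtain ⟨k, hk⟩ := hodd
        omega
    omega
  -- key counting lemma
  have key : ∀ c' : C, c' ≠ w →
      n < 2 * (voters.filter (fun v => pref v w c')).card →
      (voters.filter (fun v => pref v w c')).card >
        (voters.filter (fun v => pref v c' w)).card := by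
    intro c' hne hmaj
    have hx : voters.filter (fun v => ¬ pref v w c')
        = voters.filter (fun v => pref v c' w) := by
      apply Finset.filter_congr
      intro v hv
      constructor
      · intro h
        rcases htotal v hv c' w hne with h' | h'
        · exact h'
        · exact absurd h' h
      · intro h
        exact hasym v hv c' w h
    have hsum := Finset.card_filter_add_card_filter_not
      (s := voters) (p := fun v => pref v w c')
    rw [hx, ← hn] at hsum
    omega
  refine ⟨w, ?_⟩
  intro c' hne
  apply key c' hne
  rcases lt_or_gt_of_ne (hne : c' ≠ w) with hlt | hgt
  · -- c' < w : voters with w ≤ peak prefer w to c'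
    refine lt_of_lt_of_le hright (Nat.mul_le_mul_left 2 (Finset.card_le_card ?_))
    intro v hv
    obtain ⟨hvv, hwp⟩ := Finset.mem_filter.1 hv
    refine Finset.mem_filter.2 ⟨hvv, ?_⟩
    rcases eq_or_lt_of_le hwp with heq | hlt2
    · rw [heq]
      exact hpeak v hvv c' (heq ▸ ne_of_lt hlt)
    · exact hsp v hvv (peak v) w c' (Or.inr ⟨hlt, hlt2⟩)
        (hpeak v hvv w (ne_of_lt hlt2))
  · -- w < c' : voters with peak ≤ w prefer w to c'
    refine lt_of_lt_of_le hwP (Nat.mul_le_mul_left 2 (Finset.card_le_card ?_))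
    intro v hv
    obtain ⟨hvv, hwp⟩ := Finset.mem_filter.1 hv
    refine Finset.mem_filter.2 ⟨hvv, ?_⟩
    rcases eq_or_lt_of_le hwp with heq | hlt2
    · rw [← heq]
      exact hpeak v hvv c' (heq ▸ ne_of_gt hgt)
    · exact hsp v hvv (peak v) w c' (Or.inl ⟨hlt2, hgt⟩)
        (hpeak v hvv w (ne_of_gt hlt2))
end

section
/- In any nonempty single-peaked election there exists a weak Condorcet winner, i.e., a candidate c such that for every other candidate c', at least as many voters prefer c to c' as prefer c' to c. -/
open Finset

/-- In any nonempty single-peaked election there exists a weak Condorcet winner. -/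
theorem exists_weak_condorcet_winner_of_singlePeaked {C ι : Type*}
    [Fintype C] [Nonempty C] [LinearOrder C]
    (voters : Finset ι) (pref : ι → C → C → Prop)
    [∀ v a b, Decidable (pref v a b)]
    (hasym : ∀ v ∈ voters, ∀ a b : C, pref v a b → ¬ pref v b a)
    (htotal : ∀ v ∈ voters, ∀ a b : C, a ≠ b → pref v a b ∨ pref v b a)
    (htrans : ∀ v ∈ voters, ∀ a b c : C, pref v a b → pref v b c → pref v a c)
    (hsp : ∀ v ∈ voters, ∀ a b c : C,
      ((a < b ∧ b < c) ∨ (c < b ∧ b < a)) → pref v a b → pref v b c) :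
    ∃ w : C, ∀ c' ≠ w,
      (voters.filter (fun v => pref v w c')).card ≥
        (voters.filter (fun v => pref v c' w)).card := by
  classical
  -- every voter has a peak (top candidate)
  have exists_top : ∀ v ∈ voters, ∃ p : C, ∀ x : C, x ≠ p → pref v p x := by
    intro v hv
    have key : ∀ s : Finset C, s.Nonempty → ∃ p ∈ s, ∀ x ∈ s, x ≠ p → pref v p x := by
      intro s
      induction s using Finset.induction_on with
      | empty => intro h; simp at h
      | @insert a s ha ih =>
        intro _
        rcases s.eq_empty_or_nonempty with rfl | hs
        · exact ⟨a, by simp, by simp⟩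
        · obtain ⟨p, hp, hpmax⟩ := ih hs
          have hap : a ≠ p := fun h => ha (h ▸ hp)
          rcases htotal v hv a p hap with h | h
          · refine ⟨a, mem_insert_self _ _, ?_⟩
            intro x hx hxa
            rcases mem_insert.1 hx with rfl | hxs
            · exact absurd rfl hxa
            · by_cases hxp : x = p
              · exact hxp ▸ h
              · exact htrans v hv a p x h (hpmax x hxs hxp)
          · refine ⟨p, mem_insert_of_mem hp, ?_⟩
            intro x hx hxp
            rcases mem_insert.1 hx with rfl | hxs
            · exact h
            · exact hpmax x hxs hxp
    obtain ⟨p, _, hp⟩ := key Finset.univ univ_nonempty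
    exact ⟨p, fun x hx => hp x (mem_univ x) hx⟩
  choose! peak hpeak using exists_top
  set n := voters.card with hn
  set A : C → ℕ := fun c => (voters.filter (fun v => peak v ≤ c)).card with hA
  -- the set of candidates with at least half the peaks weakly below them
  have hS : ((Finset.univ : Finset C).filter (fun c => n ≤ 2 * A c)).Nonempty := by
    set t := (Finset.univ : Finset C).max' univ_nonempty with ht
    refine ⟨t, mem_filter.2 ⟨mem_univ _, ?_⟩⟩
    have hft : voters.filter (fun v => peak v ≤ t) = voters :=
      filter_true_of_mem (fun v _ => le_max' _ _ (mem_univ _))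
    have hAt : A t = n := by simp only [hA]; rw [hft]
    omega
  set S := ((Finset.univ : Finset C).filter (fun c => n ≤ 2 * A c)) with hSdef
  set w := S.min' hS with hwdef
  have hw1 : n ≤ 2 * A w := (mem_filter.1 (S.min'_mem hS)).2
  set B := (voters.filter (fun v => peak v < w)).card with hB
  have hw2 : 2 * B ≤ n := by
    by_contra h
    push_neg at h
    have hBpos : 0 < B := by omega
    have hTne : (voters.filter (fun v => peak v < w)).Nonempty := card_pos.1 hBpos
    have hPne : ((voters.filter (fun v => peak v < w)).image peak).Nonempty :=
      hTne.image peak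
    set m := ((voters.filter (fun v => peak v < w)).image peak).max' hPne with hm
    have hmlt : m < w := by
      have := max'_mem _ hPne
      rw [← hm] at this
      obtain ⟨v, hv, hpv⟩ := mem_image.1 this
      exact hpv ▸ (mem_filter.1 hv).2
    have hset : voters.filter (fun v => peak v ≤ m) = voters.filter (fun v => peak v < w) := by
      ext v
      simp only [mem_filter]
      constructor
      · rintro ⟨hv, hle⟩
        exact ⟨hv, lt_of_le_of_lt hle hmlt⟩
      · rintro ⟨hv, hlt⟩
        refine ⟨hv, le_max' _ _ ?_⟩
        exact mem_image.2 ⟨v, mem_filter.2 ⟨hv, hlt⟩, rfl⟩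
    have hAm : A m = B := by simp only [hA, hB]; rw [hset]
    have hmS : m ∈ S := mem_filter.2 ⟨mem_univ _, by omega⟩
    have := S.min'_le m hmS
    rw [← hwdef] at this
    exact absurd hmlt (not_lt.2 this)
  -- w is a weak Condorcet winner
  refine ⟨w, ?_⟩
  intro c' hc'
  rcases lt_or_gt_of_ne hc' with hlt | hgt
  · -- c' < w : every voter with peak ≥ w prefers w to c'
    have hpref : ∀ v ∈ voters, w ≤ peak v → pref v w c' := by
      intro v hv hle
      rcases eq_or_lt_of_le hle with heq | hlt2
      · rw [heq]; exact hpeak v hv c' (fun h => hc' (h.trans heq.symm))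
      · have h1 : pref v (peak v) w := hpeak v hv w (ne_of_lt hlt2)
        exact hsp v hv (peak v) w c' (Or.inr ⟨hlt, hlt2⟩) h1
    have hsub1 : voters.filter (fun v => ¬ peak v < w) ⊆
        voters.filter (fun v => pref v w c') := by
      intro v hv
      have ⟨h1, h2⟩ := mem_filter.1 hv
      exact mem_filter.2 ⟨h1, hpref v h1 (not_lt.1 h2)⟩
    have hsub2 : voters.filter (fun v => pref v c' w) ⊆
        voters.filter (fun v => peak v < w) := by
      intro v hv
      have ⟨h1, h2⟩ := mem_filter.1 hv
      refine mem_filter.2 ⟨h1, ?_⟩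
      by_contra hcon
      exact hasym v h1 w c' (hpref v h1 (not_lt.1 hcon)) h2
    have hc1 := card_le_card hsub1
    have hc2 := card_le_card hsub2
    have hsum := card_filter_add_card_filter_not
      (s := voters) (p := fun v => peak v < w)
    omega
  · -- c' > w : every voter with peak ≤ w prefers w to c'
    have hpref : ∀ v ∈ voters, peak v ≤ w → pref v w c' := by
      intro v hv hle
      rcases eq_or_lt_of_le hle with heq | hlt2
      · rw [← heq]; exact hpeak v hv c' (fun h => hc' (h.trans heq))
      · have h1 : pref v (peak v) w := hpeak v hv w (ne_of_gt hlt2)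
        exact hsp v hv (peak v) w c' (Or.inl ⟨hlt2, hgt⟩) h1
    have hsub1 : voters.filter (fun v => peak v ≤ w) ⊆
        voters.filter (fun v => pref v w c') := by
      intro v hv
      have ⟨h1, h2⟩ := mem_filter.1 hv
      exact mem_filter.2 ⟨h1, hpref v h1 h2⟩
    have hsub2 : voters.filter (fun v => pref v c' w) ⊆
        voters.filter (fun v => ¬ peak v ≤ w) := by
      intro v hv
      have ⟨h1, h2⟩ := mem_filter.1 hv
      refine mem_filter.2 ⟨h1, ?_⟩
      intro hcon
      exact hasym v h1 w c' (hpref v h1 hcon) h2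
    have hc1 := card_le_card hsub1
    have hc2 := card_le_card hsub2
    have hsum := card_filter_add_card_filter_not
      (s := voters) (p := fun v => peak v ≤ w)
    have hAw : A w = (voters.filter (fun v => peak v ≤ w)).card := rfl
    omega
end

section
/- (Median voter criterion) Let (C, V) be a single-peaked election with respect to axis L, let p ∈ C, let V_a be the voters whose top-ranked candidate precedes p on L, and V_b be the voters whose top-ranked candidate succeeds p on L. Then p is a Condorcet winner of (C,V) if and only if |V_a| < |V|/2 and |V_b| < |V|/2. -/
theorem mvc_aux1 {C ι : Type*} [Fintype C] [LinearOrder C]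
    (voters : Finset ι) (hV : voters.Nonempty)
    (pref : ι → C → C → Prop) [∀ v a b, Decidable (pref v a b)]
    (top : ι → C)
    (hasym : ∀ v ∈ voters, ∀ a b : C, pref v a b → ¬ pref v b a)
    (hsp : ∀ v ∈ voters, ∀ a b c : C,
      ((a < b ∧ b < c) ∨ (c < b ∧ b < a)) → pref v a b → pref v b c)
    (htop : ∀ v ∈ voters, ∀ c : C, c ≠ top v → pref v (top v) c)
    (p : C)
    (h : ∀ c ≠ p, 2 * (voters.filter (fun v => pref v p c)).card > voters.card) :
    2 * (voters.filter (fun v => top v < p)).card < voters.card := by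
  classical
  by_contra hA
  push_neg at hA
  set A := voters.filter (fun v => top v < p) with hAdef
  have hAne : A.Nonempty := by
    rw [Finset.nonempty_iff_ne_empty]
    intro he
    rw [he, Finset.card_empty] at hA
    have := hV.card_pos
    omega
  have hIne : (A.image top).Nonempty := hAne.image top
  set c := (A.image top).max' hIne with hcdef
  obtain ⟨w, hwA, hwc⟩ := Finset.mem_image.mp ((A.image top).max'_mem hIne)
  have hwlt : top w < p := (Finset.mem_filter.mp hwA).2
  have hcp : c < p := by rw [hcdef, ← hwc]; exact hwlt
  have hpref : ∀ v ∈ A, pref v c p := by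
    intro v hv
    have hvV : v ∈ voters := (Finset.mem_filter.mp hv).1
    have hvlt : top v < p := (Finset.mem_filter.mp hv).2
    have hle : top v ≤ c := Finset.le_max' _ _ (Finset.mem_image_of_mem top hv)
    rcases eq_or_lt_of_le hle with heq | hlt
    · rw [← heq]; exact htop v hvV p (ne_of_gt hvlt)
    · exact hsp v hvV (top v) c p (Or.inl ⟨hlt, hcp⟩)
        (htop v hvV c (ne_of_gt hlt))
  set F := voters.filter (fun v => pref v p c) with hFdef
  have hdisj : Disjoint A F := by
    rw [Finset.disjoint_left]
    intro v hvA hvF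
    exact hasym v (Finset.mem_filter.mp hvA).1 c p (hpref v hvA)
      (Finset.mem_filter.mp hvF).2
  have hsub : A ∪ F ⊆ voters :=
    Finset.union_subset (Finset.filter_subset _ _) (Finset.filter_subset _ _)
  have hcard : A.card + F.card ≤ voters.card := by
    rw [← Finset.card_union_of_disjoint hdisj]
    exact Finset.card_le_card hsub
  have h2 := h c (ne_of_lt hcp)
  rw [hFdef] at hcard
  omega

theorem mvc_aux2 {C ι : Type*} [Fintype C] [LinearOrder C]
    (voters : Finset ι)
    (pref : ι → C → C → Prop) [∀ v a b, Decidable (pref v a b)]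
    (top : ι → C)
    (hsp : ∀ v ∈ voters, ∀ a b c : C,
      ((a < b ∧ b < c) ∨ (c < b ∧ b < a)) → pref v a b → pref v b c)
    (htop : ∀ v ∈ voters, ∀ c : C, c ≠ top v → pref v (top v) c)
    (p c : C) (hcp : c < p)
    (hA : 2 * (voters.filter (fun v => top v < p)).card < voters.card) :
    2 * (voters.filter (fun v => pref v p c)).card > voters.card := by
  have hsub : voters.filter (fun v => ¬ top v < p) ⊆
      voters.filter (fun v => pref v p c) := by
    intro v hv
    obtain ⟨hvV, hnlt⟩ := Finset.mem_filter.mp hv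
    refine Finset.mem_filter.mpr ⟨hvV, ?_⟩
    rcases eq_or_lt_of_le (not_lt.mp hnlt) with heq | hlt
    · rw [heq]; exact htop v hvV c (ne_of_lt (heq ▸ hcp))
    · exact hsp v hvV (top v) p c (Or.inr ⟨hcp, hlt⟩)
        (htop v hvV p (ne_of_lt hlt))
  have hpart := Finset.card_filter_add_card_filter_not
    (s := voters) (p := fun v => top v < p)
  have hle := Finset.card_le_card hsub
  omega

/-- Median voter criterion: in a single-peaked election with at least one voter,
`p` is a Condorcet winner iff fewer than half the voters have their top candidate
strictly before `p` on the axis and fewer than half have it strictly after `p`. -/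
theorem median_voter_criterion {C ι : Type*} [Fintype C] [LinearOrder C]
    (voters : Finset ι) (hV : voters.Nonempty)
    (pref : ι → C → C → Prop) [∀ v a b, Decidable (pref v a b)]
    (top : ι → C)
    (hasym : ∀ v ∈ voters, ∀ a b : C, pref v a b → ¬ pref v b a)
    (htotal : ∀ v ∈ voters, ∀ a b : C, a ≠ b → pref v a b ∨ pref v b a)
    (htrans : ∀ v ∈ voters, ∀ a b c : C, pref v a b → pref v b c → pref v a c)
    (hsp : ∀ v ∈ voters, ∀ a b c : C,
      ((a < b ∧ b < c) ∨ (c < b ∧ b < a)) → pref v a b → pref v b c)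
    (htop : ∀ v ∈ voters, ∀ c : C, c ≠ top v → pref v (top v) c)
    (p : C) :
    (∀ c ≠ p, 2 * (voters.filter (fun v => pref v p c)).card > voters.card) ↔
      (2 * (voters.filter (fun v => top v < p)).card < voters.card ∧
       2 * (voters.filter (fun v => p < top v)).card < voters.card) := by
  have hsp' : ∀ v ∈ voters, ∀ a b c : Cᵒᵈ,
      ((a < b ∧ b < c) ∨ (c < b ∧ b < a)) → pref v a b → pref v b c :=
    fun v hv a b c hc => hsp v hv a b c ((hc.imp And.symm And.symm).symm)
  constructor
  · intro h
    refine ⟨mvc_aux1 voters hV pref top hasym hsp htop p h, ?_⟩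
    exact @mvc_aux1 Cᵒᵈ ι _ _ voters hV pref ‹∀ v (a b : C), Decidable (pref v a b)› top hasym hsp' htop p (fun c hc => h c hc)
  · rintro ⟨hA, hB⟩ c hc
    rcases lt_trichotomy c p with hcp | hcp | hcp
    · exact mvc_aux2 voters pref top hsp htop p c hcp hA
    · exact absurd hcp hc
    · exact @mvc_aux2 Cᵒᵈ ι _ _ voters pref ‹∀ v (a b : C), Decidable (pref v a b)› top hsp' htop p c hcp hB
end

section
/- (Half of the median voter criterion) In a single-peaked election (C,V) with respect to axis L, if the set V_a of voters whose top candidate strictly precedes p under L satisfies |V_a| ≥ |V|/2 and there exists a candidate c ≠ p with c L p, then p is not a Condorcet winner; specifically the candidate c directly preceding p on L (restricted to C) satisfies N(c,p) ≥ N(p,c). -/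
/-- Half of the median voter criterion: if at least half the voters have their top
candidate strictly before `p` on the axis, and `c` is the candidate directly preceding
`p` on the axis (restricted to the candidate set), then `N(c,p) ≥ N(p,c)`; in
particular `p` is not a Condorcet winner. -/
theorem not_condorcet_of_half_before {C ι : Type*} [LinearOrder C]
    (Cs : Finset C) (voters : Finset ι)
    (pref : ι → C → C → Prop) [∀ v a b, Decidable (pref v a b)]
    (top : ι → C)
    (hasym : ∀ v ∈ voters, ∀ a b : C, pref v a b → ¬ pref v b a)
    (hsp : ∀ v ∈ voters, ∀ a b c : C, a ∈ Cs → b ∈ Cs → c ∈ Cs →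
      ((a < b ∧ b < c) ∨ (c < b ∧ b < a)) → pref v a b → pref v b c)
    (htop : ∀ v ∈ voters, top v ∈ Cs ∧ ∀ c ∈ Cs, c ≠ top v → pref v (top v) c)
    (p : C) (hp : p ∈ Cs)
    (c : C) (hc : c ∈ Cs) (hcp : c < p)
    (hdirect : ∀ d ∈ Cs, ¬ (c < d ∧ d < p))
    (hVa : 2 * (voters.filter (fun v => top v < p)).card ≥ voters.card) :
    (voters.filter (fun v => pref v c p)).card ≥
        (voters.filter (fun v => pref v p c)).card ∧
      ¬ (∀ c' ∈ Cs, c' ≠ p →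
          (voters.filter (fun v => pref v p c')).card >
            (voters.filter (fun v => pref v c' p)).card) := by
  -- every voter with top before p prefers c to p
  have key : ∀ v ∈ voters, top v < p → pref v c p := by
    intro v hv hlt
    obtain ⟨htc, hbest⟩ := htop v hv
    rcases eq_or_ne (top v) c with h | h
    · have := hbest p hp (by rw [h]; exact (ne_of_lt hcp).symm)
      rwa [h] at this
    · have htlc : top v < c := by
        rcases lt_or_ge (top v) c with h' | h'
        · exact h'
        · exact absurd ⟨lt_of_le_of_ne h' (Ne.symm h), hlt⟩ (hdirect _ htc)
      exact hsp v hv (top v) c p htc hc hp (Or.inl ⟨htlc, hcp⟩)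
        (hbest c hc (Ne.symm h))
  have hsub : voters.filter (fun v => top v < p) ⊆
      voters.filter (fun v => pref v c p) := by
    intro v hv
    simp only [Finset.mem_filter] at *
    exact ⟨hv.1, key v hv.1 hv.2⟩
  have h1 : 2 * (voters.filter (fun v => pref v c p)).card ≥ voters.card :=
    le_trans hVa (Nat.mul_le_mul_left 2 (Finset.card_le_card hsub))
  have hdisj : voters.filter (fun v => pref v p c) ⊆
      voters.filter (fun v => ¬ pref v c p) := by
    intro v hv
    simp only [Finset.mem_filter] at *
    exact ⟨hv.1, fun h => hasym v hv.1 p c hv.2 h⟩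
  have hsplit := Finset.card_filter_add_card_filter_not
    (s := voters) (p := fun v => pref v c p)
  have h2 := Finset.card_le_card hdisj
  have hle : (voters.filter (fun v => pref v c p)).card ≥
      (voters.filter (fun v => pref v p c)).card := by
    have hc' := Finset.card_le_card (Finset.filter_subset (fun v => pref v c p) voters)
    omega
  refine ⟨hle, fun hcon => ?_⟩
  exact absurd hle (not_le.mpr (hcon c hc (ne_of_lt hcp)))
end

section
/- (Barrier lemma for single-peaked k-Approval) Let all voters be single-peaked with respect to an axis L over a candidate universe. Let H be a set of exactly k candidates, let X be a set of candidates all of which precede every member of H on L, let c ∈ X, and let z be the k-Approval score of c in the election with candidate set X ∪ H. Then for every set Y of candidates all of which succeed every member of H on L, the k-Approval score of c in the election with candidate set X ∪ H ∪ Y also equals z. -/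
/-- Barrier lemma for single-peaked k-Approval: if `H` has exactly `k` candidates,
`X` lies entirely before `H` on the axis and `Y` entirely after `H`, then for
`c ∈ X` the k-Approval score of `c` in the election on `X ∪ H ∪ Y` equals its
k-Approval score in the election on `X ∪ H`. -/
theorem kApproval_barrier_lemma {C ι : Type*} [LinearOrder C] [DecidableEq C]
    (voters : Finset ι) (pref : ι → C → C → Prop)
    [∀ v a b, Decidable (pref v a b)]
    (hasym : ∀ v ∈ voters, ∀ a b : C, pref v a b → ¬ pref v b a)
    (htotal : ∀ v ∈ voters, ∀ a b : C, a ≠ b → pref v a b ∨ pref v b a)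
    (htrans : ∀ v ∈ voters, ∀ a b c : C, pref v a b → pref v b c → pref v a c)
    (hsp : ∀ v ∈ voters, ∀ a b c : C,
      ((a < b ∧ b < c) ∨ (c < b ∧ b < a)) → pref v a b → pref v b c)
    (k : ℕ) (H X Y : Finset C)
    (hH : H.card = k)
    (hX : ∀ x ∈ X, ∀ h ∈ H, x < h)
    (hY : ∀ y ∈ Y, ∀ h ∈ H, h < y)
    (c : C) (hc : c ∈ X) :
    (voters.filter
        (fun v => ((X ∪ H ∪ Y).filter (fun e => pref v e c)).card < k)).card =
      (voters.filter
        (fun v => ((X ∪ H).filter (fun e => pref v e c)).card < k)).card := by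
  congr 1
  apply Finset.filter_congr
  intro v hv
  constructor
  · -- forward: subset gives monotonicity
    intro hlt
    exact lt_of_le_of_lt
      (Finset.card_le_card (Finset.filter_subset_filter _
        (Finset.union_subset_union_left (Finset.Subset.refl _) |>.trans
          Finset.subset_union_left))) hlt
  · intro hlt
    -- there exists h ∈ H with ¬ pref v h c
    obtain ⟨h0, hh0, hnp⟩ : ∃ h ∈ H, ¬ pref v h c := by
      by_contra hall
      push_neg at hall
      have hsub : H ⊆ (X ∪ H).filter (fun e => pref v e c) := by
        intro h hh
        exact Finset.mem_filter.mpr ⟨Finset.mem_union_right _ hh, hall h hh⟩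
      have := Finset.card_le_card hsub
      omega
    have hch : c < h0 := hX c hc h0 hh0
    have hpch : pref v c h0 := by
      rcases htotal v hv h0 c (ne_of_gt hch) with hp | hp
      · exact absurd hp hnp
      · exact hp
    -- no y ∈ Y is preferred to c
    have hYno : ∀ y ∈ Y, ¬ pref v y c := by
      intro y hy hyc
      have hhy : h0 < y := hY y hy h0 hh0
      have h1 : pref v h0 y := hsp v hv c h0 y (Or.inl ⟨hch, hhy⟩) hpch
      have h2 : pref v c y := htrans v hv c h0 y hpch h1
      exact hasym v hv c y h2 hyc
    have hsub : (X ∪ H ∪ Y).filter (fun e => pref v e c) ⊆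
        (X ∪ H).filter (fun e => pref v e c) := by
      intro e he
      rcases Finset.mem_filter.mp he with ⟨hem, hep⟩
      rcases Finset.mem_union.mp hem with hem | hem
      · exact Finset.mem_filter.mpr ⟨hem, hep⟩
      · exact absurd hep (hYno e hem)
    exact lt_of_le_of_lt (Finset.card_le_card hsub) hlt
end

section
/- (Correctness of CCDC counting formula for Approval) Let (C,V) be an Approval election, p ∈ C, and k ≥ 0. Let k₀ be the number of candidates c ∈ C \ {p} whose approval score is at least that of p. If k₀ ≤ k, then the number of subsets C' ⊆ C \ {p} with |C'| ≤ k such that p is the unique Approval winner of (C − C', V) equals Σ_{i=0}^{k−k₀} C(|C| − k₀ − 1, i); if k₀ > k, this number is 0. -/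
open Finset

lemma card_powerset_filter_card_le {C : Type*} [DecidableEq C] (X : Finset C) (m : ℕ) :
    (X.powerset.filter (fun s => s.card ≤ m)).card
      = ∑ i ∈ Finset.range (m + 1), X.card.choose i := by
  have h : X.powerset.filter (fun s => s.card ≤ m)
      = (Finset.range (m + 1)).biUnion (fun i => X.powersetCard i) := by
    ext s
    simp only [mem_filter, mem_powerset, mem_biUnion, mem_range, mem_powersetCard,
      Nat.lt_succ_iff]
    constructor
    · rintro ⟨hs, hc⟩; exact ⟨s.card, hc, hs, rfl⟩
    · rintro ⟨i, hi, hs, rfl⟩; exact ⟨hs, hi⟩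
  rw [h, Finset.card_biUnion]
  · exact Finset.sum_congr rfl fun i _ => Finset.card_powersetCard i X
  · intro i _ j _ hij
    refine Finset.disjoint_left.2 fun s hs hs' => ?_
    rw [mem_powersetCard] at hs hs'
    exact hij (hs.2 ▸ hs'.2)

/-- Correctness of the CCDC counting formula for Approval: with `k₀` the number of
candidates `c ≠ p` whose approval score is at least `p`'s, the number of subsets
`C' ⊆ C \ {p}` with `|C'| ≤ k` such that `p` is the unique approval winner of
`(C − C', V)` is `∑_{i=0}^{k−k₀} C(|C|−k₀−1, i)` if `k₀ ≤ k`, and `0` otherwise. -/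
theorem approval_ccdc_count {C : Type*} [DecidableEq C]
    (Cs : Finset C) (p : C) (hp : p ∈ Cs) (score : C → ℕ) (k : ℕ) :
    (((Cs.erase p).filter (fun c => score p ≤ score c)).card ≤ k →
      ((Cs.erase p).powerset.filter (fun C' => C'.card ≤ k ∧
          ∀ c ∈ Cs \ C', c ≠ p → score c < score p)).card =
        ∑ i ∈ Finset.range
            (k - ((Cs.erase p).filter (fun c => score p ≤ score c)).card + 1),
          (Cs.card - ((Cs.erase p).filter (fun c => score p ≤ score c)).card - 1).choose i) ∧
    (k < ((Cs.erase p).filter (fun c => score p ≤ score c)).card →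
      ((Cs.erase p).powerset.filter (fun C' => C'.card ≤ k ∧
          ∀ c ∈ Cs \ C', c ≠ p → score c < score p)).card = 0) := by
  classical
  set A := Cs.erase p with hA
  set B := A.filter (fun c => score p ≤ score c) with hB
  have hBA : B ⊆ A := filter_subset _ _
  -- rewrite the filter condition
  have hfilt : A.powerset.filter (fun C' => C'.card ≤ k ∧
      ∀ c ∈ Cs \ C', c ≠ p → score c < score p)
      = A.powerset.filter (fun C' => C'.card ≤ k ∧ B ⊆ C') := by
    refine Finset.filter_congr fun C' hC' => ?_
    rw [mem_powerset] at hC'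
    constructor
    · rintro ⟨h1, h2⟩
      refine ⟨h1, fun b hb => ?_⟩
      rw [hB, mem_filter] at hb
      by_contra hbC
      have hbCs : b ∈ Cs := mem_of_mem_erase hb.1
      have hbp : b ≠ p := ne_of_mem_erase hb.1
      exact absurd (h2 b (mem_sdiff.2 ⟨hbCs, hbC⟩) hbp) (not_lt.2 hb.2)
    · rintro ⟨h1, h2⟩
      refine ⟨h1, fun c hc hcp => ?_⟩
      rw [mem_sdiff] at hc
      have hcA : c ∈ A := mem_erase.2 ⟨hcp, hc.1⟩
      have hcB : c ∉ B := fun h => hc.2 (h2 h)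
      rw [hB, mem_filter] at hcB
      push_neg at hcB
      exact hcB hcA
  rw [hfilt]
  constructor
  · intro hk
    -- bijection C' ↦ C' \ B
    have hcard : (A.powerset.filter (fun C' => C'.card ≤ k ∧ B ⊆ C')).card
        = ((A \ B).powerset.filter (fun s => s.card ≤ k - B.card)).card := by
      apply Finset.card_nbij' (i := fun C' => C' \ B) (j := fun s => s ∪ B)
      · intro C' hC'
        rw [mem_coe, mem_filter, mem_powerset] at hC'
        obtain ⟨hsub, hle, hBsub⟩ := hC'
        rw [mem_coe, mem_filter, mem_powerset]
        refine ⟨sdiff_subset_sdiff hsub Subset.rfl, ?_⟩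
        have : (C' \ B).card = C'.card - B.card := card_sdiff_of_subset hBsub
        rw [this]
        exact Nat.sub_le_sub_right hle _
      · intro s hs
        rw [mem_coe, mem_filter, mem_powerset] at hs
        obtain ⟨hsub, hle⟩ := hs
        rw [mem_coe, mem_filter, mem_powerset]
        have hdisj : Disjoint s B := disjoint_of_subset_left hsub sdiff_disjoint
        refine ⟨union_subset (hsub.trans sdiff_subset) hBA, ?_, subset_union_right⟩
        rw [card_union_of_disjoint hdisj]
        have hBk : B.card ≤ k := hk
        omega
      · intro C' hC'
        rw [mem_coe, mem_filter] at hC'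
        exact sdiff_union_of_subset hC'.2.2
      · intro s hs
        rw [mem_coe, mem_filter, mem_powerset] at hs
        have hdisj : Disjoint s B := disjoint_of_subset_left hs.1 sdiff_disjoint
        beta_reduce
        rw [union_sdiff_right, sdiff_eq_self_of_disjoint hdisj]
    rw [hcard, card_powerset_filter_card_le]
    have h1 : (A \ B).card = A.card - B.card := card_sdiff_of_subset hBA
    have h2 : A.card = Cs.card - 1 := card_erase_of_mem hp
    have h3 : 1 ≤ Cs.card := card_pos.2 ⟨p, hp⟩
    have harg : (A \ B).card = Cs.card - B.card - 1 := by rw [h1, h2]; omega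
    rw [harg]
  · intro hk
    rw [Finset.card_eq_zero, Finset.filter_eq_empty_iff]
    intro C' hC'
    rintro ⟨h1, h2⟩
    have := card_le_card h2
    omega
end

section
/- (Matching characterization for 2-Approval CCDV construction) Let G be a bipartite graph with parts X = {x₁,…,x_n}, Y = {y₁,…,y_n} and edges e₁,…,e_m, let D = max degree, and assume D ≥ 2. Construct the 2-Approval election as in the reduction: C = {p} ∪ X ∪ Y ∪ B with |B| = T + D dummies (T = Σ_v (D − d(v))), voters so that p and every vertex-candidate have score D and every dummy has score 1, where voter v_ℓ (for edge e_ℓ = {x_i, y_j}) gives one point each to x_i and y_j. Then the subsets V' of voters with |V'| ≤ n whose deletion makes p the unique 2-Approval winner are exactly the sets {v_ℓ : e_ℓ ∈ M} for perfect matchings M of G; in particular their number equals the number of perfect matchings of G. -/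
/-- Matching characterization for the 2-Approval CCDV construction.
The election: candidates `Call` consist of `p`, vertex candidates `Xs ∪ Ys`
(`|Xs| = |Ys| = n`), and dummies `Call \ ({p} ∪ Xs ∪ Ys)`. Each voter approves
exactly two candidates: edge voters (in `VE`) approve `{x,y}` with `x ∈ Xs`,
`y ∈ Ys` (distinct voters correspond to distinct edges), and filler voters approve
one candidate from `{p} ∪ Xs ∪ Ys` and one dummy. Scores: `p` and every vertex
candidate have score `D ≥ 2`, every dummy has score `1`. Then the subsets `V'` of
voters with `|V'| ≤ n` whose deletion makes `p` the unique 2-Approval winner are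
exactly the sets of edge voters forming a perfect matching, and their number equals
the number of perfect matchings. -/
theorem twoApproval_ccdv_matching {C ι : Type*} [DecidableEq C] [DecidableEq ι]
    (Call : Finset C) (p : C) (Xs Ys : Finset C) (n : ℕ)
    (Vall VE : Finset ι) (appr : ι → Finset C) (D : ℕ)
    (hpC : p ∈ Call) (hXC : Xs ⊆ Call) (hYC : Ys ⊆ Call)
    (hXY : Disjoint Xs Ys) (hpXY : p ∉ Xs ∪ Ys)
    (hXn : Xs.card = n) (hYn : Ys.card = n)
    (hD : 2 ≤ D)
    (happr : ∀ v ∈ Vall, appr v ⊆ Call ∧ (appr v).card = 2)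
    (hVE : VE ⊆ Vall)
    (hedge : ∀ v ∈ VE, ∃ x ∈ Xs, ∃ y ∈ Ys, appr v = {x, y})
    (hinj : ∀ v ∈ VE, ∀ w ∈ VE, appr v = appr w → v = w)
    (hfill : ∀ v ∈ Vall, v ∉ VE →
      ∃ z ∈ insert p (Xs ∪ Ys), ∃ b ∈ Call \ insert p (Xs ∪ Ys), appr v = {z, b})
    (hscorep : (Vall.filter (fun v => p ∈ appr v)).card = D)
    (hscoreXY : ∀ z ∈ Xs ∪ Ys, (Vall.filter (fun v => z ∈ appr v)).card = D)
    (hscoreB : ∀ b ∈ Call \ insert p (Xs ∪ Ys),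
      (Vall.filter (fun v => b ∈ appr v)).card = 1) :
    (∀ V' ⊆ Vall, V'.card ≤ n →
      ((∀ c ∈ Call, c ≠ p →
          ((Vall \ V').filter (fun v => c ∈ appr v)).card <
            ((Vall \ V').filter (fun v => p ∈ appr v)).card) ↔
        (V' ⊆ VE ∧ V'.card = n ∧
          (V' : Set ι).Pairwise (fun v w => Disjoint (appr v) (appr w))))) ∧
    (Vall.powerset.filter (fun V' => V'.card ≤ n ∧ ∀ c ∈ Call, c ≠ p →
          ((Vall \ V').filter (fun v => c ∈ appr v)).card <
            ((Vall \ V').filter (fun v => p ∈ appr v)).card)).card =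
      (VE.powerset.filter (fun (M : Finset ι) => M.card = n ∧
          (M : Set ι).Pairwise (fun v w => Disjoint (appr v) (appr w)))).card := by
  classical
  -- remaining score formula
  have hfc : ∀ V' : Finset ι, V' ⊆ Vall → ∀ c : C,
      ((Vall \ V').filter (fun v => c ∈ appr v)).card
        = (Vall.filter (fun v => c ∈ appr v)).card
          - (V'.filter (fun v => c ∈ appr v)).card := by
    intro V' hV' c
    have h : (Vall \ V').filter (fun v => c ∈ appr v)
        = Vall.filter (fun v => c ∈ appr v) \ V'.filter (fun v => c ∈ appr v) := by
      ext v
      simp only [Finset.mem_filter, Finset.mem_sdiff]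
      constructor
      · rintro ⟨⟨hv, hnv⟩, hc⟩; exact ⟨⟨hv, hc⟩, fun h => hnv h.1⟩
      · rintro ⟨⟨hv, hc⟩, h⟩; exact ⟨⟨hv, fun hv' => h ⟨hv', hc⟩⟩, hc⟩
    rw [h, Finset.card_sdiff_of_subset (Finset.filter_subset_filter _ hV')]
  -- double counting
  have hdouble : ∀ (T : Finset C) (W : Finset ι),
      ∑ z ∈ T, (W.filter (fun v => z ∈ appr v)).card
        = ∑ v ∈ W, (appr v ∩ T).card := by
    intro T W
    simp only [Finset.card_filter]
    rw [Finset.sum_comm]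
    refine Finset.sum_congr rfl fun v _ => ?_
    rw [← Finset.card_filter]
    congr 1
    ext z
    simp [Finset.mem_inter, and_comm]
  have hXYcard : (Xs ∪ Ys).card = 2 * n := by
    rw [Finset.card_union_of_disjoint hXY, hXn, hYn]; omega
  -- the key equivalence
  have key : ∀ V' ⊆ Vall, V'.card ≤ n →
      ((∀ c ∈ Call, c ≠ p →
          ((Vall \ V').filter (fun v => c ∈ appr v)).card <
            ((Vall \ V').filter (fun v => p ∈ appr v)).card) ↔
        (V' ⊆ VE ∧ V'.card = n ∧
          (V' : Set ι).Pairwise (fun v w => Disjoint (appr v) (appr w)))) := by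
    intro V' hV'sub hV'card
    have hr_le : ∀ c : C, (V'.filter (fun v => c ∈ appr v)).card
        ≤ (Vall.filter (fun v => c ∈ appr v)).card :=
      fun c => Finset.card_le_card (Finset.filter_subset_filter _ hV'sub)
    constructor
    · -- forward direction
      intro hcond
      set a := (V'.filter (fun v => p ∈ appr v)).card with ha
      have haD : a ≤ D := by rw [← hscorep]; exact hr_le p
      have hstep1 : ∀ z ∈ Xs ∪ Ys, a < (V'.filter (fun v => z ∈ appr v)).card := by
        intro z hz
        have hzC : z ∈ Call := by
          rcases Finset.mem_union.mp hz with h | h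
          · exact hXC h
          · exact hYC h
        have hzp : z ≠ p := fun h => hpXY (h ▸ hz)
        have := hcond z hzC hzp
        rw [hfc V' hV'sub z, hfc V' hV'sub p, hscorep, hscoreXY z hz] at this
        have hzD : (V'.filter (fun v => z ∈ appr v)).card ≤ D := by
          rw [← hscoreXY z hz]; exact hr_le z
        omega
      have hsum1 : (2 * n) * (a + 1)
          ≤ ∑ z ∈ Xs ∪ Ys, (V'.filter (fun v => z ∈ appr v)).card := by
        calc (2 * n) * (a + 1) = (Xs ∪ Ys).card • (a + 1) := by
              rw [hXYcard, smul_eq_mul]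
          _ ≤ _ := Finset.card_nsmul_le_sum _ _ _ (fun z hz => hstep1 z hz)
      have hsum2 : ∑ v ∈ V', (appr v ∩ (Xs ∪ Ys)).card ≤ 2 * V'.card := by
        calc ∑ v ∈ V', (appr v ∩ (Xs ∪ Ys)).card
            ≤ V'.card • 2 := Finset.sum_le_card_nsmul _ _ 2 (fun v hv => by
              calc (appr v ∩ (Xs ∪ Ys)).card ≤ (appr v).card :=
                    Finset.card_le_card Finset.inter_subset_left
                _ = 2 := (happr v (hV'sub hv)).2)
          _ = 2 * V'.card := by rw [smul_eq_mul]; omega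
      rw [hdouble (Xs ∪ Ys) V'] at hsum1
      rcases Nat.eq_zero_or_pos n with hn0 | hnpos
      · -- n = 0
        have hV0 : V' = ∅ := Finset.card_eq_zero.mp (by omega)
        subst hV0
        refine ⟨Finset.empty_subset _, by simpa using hn0.symm, by simp⟩
      · -- n ≥ 1
        have ha0 : a = 0 := by nlinarith [hV'card]
        rw [ha0] at hsum1
        norm_num at hsum1
      -- each voter's approvals lie in Xs ∪ Ys
        have hsum_eq : ∑ v ∈ V', (appr v ∩ (Xs ∪ Ys)).card = 2 * V'.card ∧ V'.card = n := by
          constructor <;> omega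
        have hall2 : ∀ v ∈ V', (appr v ∩ (Xs ∪ Ys)).card = 2 := by
          by_contra hcon
          push_neg at hcon
          obtain ⟨v0, hv0, hv0ne⟩ := hcon
          have hlt : ∑ v ∈ V', (appr v ∩ (Xs ∪ Ys)).card < ∑ v ∈ V', 2 := by
            refine Finset.sum_lt_sum (fun v hv => ?_) ⟨v0, hv0, ?_⟩
            · calc (appr v ∩ (Xs ∪ Ys)).card ≤ (appr v).card :=
                    Finset.card_le_card Finset.inter_subset_left
                _ = 2 := (happr v (hV'sub hv)).2
            · have : (appr v0 ∩ (Xs ∪ Ys)).card ≤ 2 := by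
                calc (appr v0 ∩ (Xs ∪ Ys)).card ≤ (appr v0).card :=
                      Finset.card_le_card Finset.inter_subset_left
                  _ = 2 := (happr v0 (hV'sub hv0)).2
              omega
          rw [Finset.sum_const, smul_eq_mul] at hlt
          omega
        have happrXY : ∀ v ∈ V', appr v ⊆ Xs ∪ Ys := by
          intro v hv
          have h2 : (appr v).card ≤ (appr v ∩ (Xs ∪ Ys)).card := by
            rw [hall2 v hv, (happr v (hV'sub hv)).2]
          have := Finset.eq_of_subset_of_card_le Finset.inter_subset_left h2
          rw [← this]
          exact Finset.inter_subset_right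
        have hVE' : V' ⊆ VE := by
          intro v hv
          by_contra hvne
          obtain ⟨z, hz, b, hb, hab⟩ := hfill v (hV'sub hv) hvne
          have hbin : b ∈ appr v := by rw [hab]; simp
          have := happrXY v hv hbin
          rw [Finset.mem_sdiff, Finset.mem_insert] at hb
          exact hb.2 (Or.inr this)
        -- each z hit at most once
        have hrle1 : ∀ z ∈ Xs ∪ Ys, (V'.filter (fun v => z ∈ appr v)).card ≤ 1 := by
          by_contra hcon
          push_neg at hcon
          obtain ⟨z0, hz0, hz0gt⟩ := hcon
          have hlt : ∑ z ∈ Xs ∪ Ys, 1 < ∑ z ∈ Xs ∪ Ys, (V'.filter (fun v => z ∈ appr v)).card := by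
            refine Finset.sum_lt_sum (fun z hz => ?_) ⟨z0, hz0, hz0gt⟩
            have := hstep1 z hz
            omega
          rw [Finset.sum_const, smul_eq_mul, mul_one, hXYcard] at hlt
          have hd := hdouble (Xs ∪ Ys) V'
          omega
        refine ⟨hVE', hsum_eq.2, ?_⟩
        intro v hv w hw hvw
        by_contra hnd
        obtain ⟨z, hzv, hzw⟩ := Finset.not_disjoint_iff.mp hnd
        have hvV : v ∈ V' := hv
        have hwV : w ∈ V' := hw
        have hzXY : z ∈ Xs ∪ Ys := happrXY v hvV hzv
        have h1 := hrle1 z hzXY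
        have := Finset.card_le_one.mp h1 v (Finset.mem_filter.mpr ⟨hvV, hzv⟩)
          w (Finset.mem_filter.mpr ⟨hwV, hzw⟩)
        exact hvw this
    · -- backward direction
      rintro ⟨hVE', hcard, hpair⟩
      -- p loses nothing
      have hrp : (V'.filter (fun v => p ∈ appr v)).card = 0 := by
        rw [Finset.card_eq_zero, Finset.filter_eq_empty_iff]
        intro v hv hp
        obtain ⟨x, hx, y, hy, hxy⟩ := hedge v (hVE' hv)
        rw [hxy, Finset.mem_insert, Finset.mem_singleton] at hp
        rcases hp with h | h
        · exact hpXY (Finset.mem_union_left _ (h ▸ hx))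
        · exact hpXY (Finset.mem_union_right _ (h ▸ hy))
      have hrle1 : ∀ z : C, (V'.filter (fun v => z ∈ appr v)).card ≤ 1 := by
        intro z
        refine Finset.card_le_one.mpr (fun v hv w hw => ?_)
        rw [Finset.mem_filter] at hv hw
        by_contra hvw
        have := hpair (Finset.mem_coe.mpr hv.1) (Finset.mem_coe.mpr hw.1) hvw
        exact (Finset.disjoint_left.mp this hv.2) hw.2
      -- each part is exactly covered
      have hcover : ∀ (T : Finset C), T.card = n → Disjoint T ((Xs ∪ Ys) \ T) →
          (∀ v ∈ V', (appr v ∩ T).card = 1) →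
          ∀ c ∈ T, 1 ≤ (V'.filter (fun v => c ∈ appr v)).card := by
        intro T hTcard _ hone c hc
        by_contra hcon
        push_neg at hcon
        have hc0 : (V'.filter (fun v => c ∈ appr v)).card = 0 := by omega
        have hsumT : ∑ z ∈ T, (V'.filter (fun v => z ∈ appr v)).card = n := by
          rw [hdouble T V']
          calc ∑ v ∈ V', (appr v ∩ T).card = ∑ v ∈ V', 1 :=
                Finset.sum_congr rfl (fun v hv => hone v hv)
            _ = n := by rw [Finset.sum_const, smul_eq_mul, mul_one, hcard]
        have hlt : ∑ z ∈ T, (V'.filter (fun v => z ∈ appr v)).card < ∑ z ∈ T, 1 := by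
          refine Finset.sum_lt_sum (fun z _ => hrle1 z) ⟨c, hc, by omega⟩
        rw [Finset.sum_const, smul_eq_mul, mul_one, hTcard] at hlt
        omega
      have honeX : ∀ v ∈ V', (appr v ∩ Xs).card = 1 := by
        intro v hv
        obtain ⟨x, hx, y, hy, hxy⟩ := hedge v (hVE' hv)
        have : appr v ∩ Xs = {x} := by
          rw [hxy]
          ext z
          simp only [Finset.mem_inter, Finset.mem_insert, Finset.mem_singleton]
          constructor
          · rintro ⟨h | h, hz⟩
            · exact h
            · exact absurd (h ▸ hz) (Finset.disjoint_right.mp hXY hy)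
          · rintro rfl; exact ⟨Or.inl rfl, hx⟩
        rw [this, Finset.card_singleton]
      have honeY : ∀ v ∈ V', (appr v ∩ Ys).card = 1 := by
        intro v hv
        obtain ⟨x, hx, y, hy, hxy⟩ := hedge v (hVE' hv)
        have : appr v ∩ Ys = {y} := by
          rw [hxy]
          ext z
          simp only [Finset.mem_inter, Finset.mem_insert, Finset.mem_singleton]
          constructor
          · rintro ⟨h | h, hz⟩
            · exact absurd (h ▸ hz) (Finset.disjoint_left.mp hXY hx)
            · exact h
          · rintro rfl; exact ⟨Or.inr rfl, hy⟩
        rw [this, Finset.card_singleton]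
      intro c hcC hcp
      rw [hfc V' hV'sub c, hfc V' hV'sub p, hscorep, hrp, Nat.sub_zero]
      by_cases hcXY : c ∈ Xs ∪ Ys
      · have hge1 : 1 ≤ (V'.filter (fun v => c ∈ appr v)).card := by
          rcases Finset.mem_union.mp hcXY with h | h
          · exact hcover Xs hXn (Finset.disjoint_sdiff) honeX c h
          · exact hcover Ys hYn (Finset.disjoint_sdiff) honeY c h
        rw [hscoreXY c hcXY]
        omega
      · have hdum : c ∈ Call \ insert p (Xs ∪ Ys) := by
          rw [Finset.mem_sdiff, Finset.mem_insert]
          exact ⟨hcC, fun h => by rcases h with h | h; exact hcp h; exact hcXY h⟩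
        have := hscoreB c hdum
        rw [this]
        omega
  refine ⟨key, ?_⟩
  have hsetseq : (Vall.powerset.filter (fun V' => V'.card ≤ n ∧ ∀ c ∈ Call, c ≠ p →
          ((Vall \ V').filter (fun v => c ∈ appr v)).card <
            ((Vall \ V').filter (fun v => p ∈ appr v)).card))
      = (VE.powerset.filter (fun (M : Finset ι) => M.card = n ∧
          (M : Set ι).Pairwise (fun v w => Disjoint (appr v) (appr w)))) := by
    ext V'
    simp only [Finset.mem_filter, Finset.mem_powerset]
    constructor
    · rintro ⟨hsub, hle, hcond⟩
      obtain ⟨h1, h2, h3⟩ := (key V' hsub hle).mp hcond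
      exact ⟨h1, h2, h3⟩
    · rintro ⟨hsub, hcard, hpair⟩
      have hsubV : V' ⊆ Vall := hsub.trans hVE
      exact ⟨hsubV, le_of_eq hcard,
        (key V' hsubV (le_of_eq hcard)).mpr ⟨hsub, hcard, hpair⟩⟩
  rw [hsetseq]
end

section
/- (Exact cover characterization for Condorcet CCAV construction) Let B = {b₁,…,b_{3k}} with k ≥ 4 and S = {S₁,…,S_n} a family of 3-element subsets of B. Build the election with C = B ∪ {p}, V consisting of k − 3 voters each with order b₁ > b₂ > ⋯ > b_{3k} > p, and for each S_j = {b_{j1}, b_{j2}, b_{j3}} an unregistered voter w_j with order b_{j1} > b_{j2} > b_{j3} > p > (rest). Then a subset W' of unregistered voters with |W'| ≤ k makes p the Condorcet winner of (C, V ∪ W') if and only if |W'| = k and the corresponding sets {S_j : w_j ∈ W'} form an exact cover of B (k sets whose union is B, pairwise disjoint). In particular, the number of such W' equals the number of exact covers of B by k sets from S. -/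
open scoped Classical

/-- Exact cover characterization for the Condorcet CCAV construction. Candidates are
`B ∪ {p}` with `|B| = 3k`, `k ≥ 4`. The `k − 3` registered voters all prefer every
`b ∈ B` to `p`; the unregistered voter indexed by `j` prefers exactly the three
elements of `S j` to `p`. Hence in `(C, V ∪ W')`, for `b ∈ B` we have
`N(b,p) = (k−3) + |{j ∈ W' : b ∈ S j}|` and `N(p,b) = |{j ∈ W' : b ∉ S j}|`.
Then `W' ⊆ Wall` with `|W'| ≤ k` makes `p` the Condorcet winner iff `|W'| = k` and
`{S j : j ∈ W'}` is an exact cover of `B` (pairwise disjoint with union `B`); in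
particular the number of such `W'` equals the number of exact covers. -/
theorem condorcet_ccav_exact_cover {β ι : Type*} [DecidableEq β] [DecidableEq ι]
    (k : ℕ) (hk : 4 ≤ k) (Bs : Finset β) (hB : Bs.card = 3 * k)
    (Wall : Finset ι) (S : ι → Finset β)
    (hS : ∀ j ∈ Wall, S j ⊆ Bs ∧ (S j).card = 3) :
    (∀ W' ⊆ Wall, W'.card ≤ k →
      ((∀ b ∈ Bs,
          (k - 3) + (W'.filter (fun j => b ∈ S j)).card <
            (W'.filter (fun j => b ∉ S j)).card) ↔
        (W'.card = k ∧ (W' : Set ι).PairwiseDisjoint S ∧ W'.biUnion S = Bs))) ∧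
    (Wall.powerset.filter (fun (W' : Finset ι) => W'.card ≤ k ∧ ∀ b ∈ Bs,
        (k - 3) + (W'.filter (fun j => b ∈ S j)).card <
          (W'.filter (fun j => b ∉ S j)).card)).card =
      (Wall.powerset.filter (fun (W' : Finset ι) => W'.card = k ∧
          (W' : Set ι).PairwiseDisjoint S ∧ W'.biUnion S = Bs)).card := by
  have main : ∀ W' ⊆ Wall, W'.card ≤ k →
      ((∀ b ∈ Bs,
          (k - 3) + (W'.filter (fun j => b ∈ S j)).card <
            (W'.filter (fun j => b ∉ S j)).card) ↔
        (W'.card = k ∧ (W' : Set ι).PairwiseDisjoint S ∧ W'.biUnion S = Bs)) := by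
    intro W' hW hcard
    have hsub : ∀ j ∈ W', S j ⊆ Bs := fun j hj => (hS j (hW hj)).1
    have hc3 : ∀ j ∈ W', (S j).card = 3 := fun j hj => (hS j (hW hj)).2
    have hsplit : ∀ b : β, (W'.filter (fun j => b ∈ S j)).card +
        (W'.filter (fun j => b ∉ S j)).card = W'.card :=
      fun b => Finset.card_filter_add_card_filter_not _
    have hBsne : Bs.Nonempty := by
      rw [← Finset.card_pos, hB]; omega
    have hsum : ∑ b ∈ Bs, (W'.filter (fun j => b ∈ S j)).card = 3 * W'.card := by
      calc ∑ b ∈ Bs, (W'.filter (fun j => b ∈ S j)).card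
          = ∑ b ∈ Bs, ∑ j ∈ W', if b ∈ S j then 1 else 0 :=
            Finset.sum_congr rfl fun b _ => Finset.card_filter _ _
        _ = ∑ j ∈ W', ∑ b ∈ Bs, if b ∈ S j then 1 else 0 := Finset.sum_comm
        _ = ∑ j ∈ W', (Bs.filter (fun b => b ∈ S j)).card :=
            Finset.sum_congr rfl fun j _ => (Finset.card_filter _ _).symm
        _ = ∑ j ∈ W', (S j).card := by
            refine Finset.sum_congr rfl fun j hj => ?_
            rw [Finset.filter_mem_eq_inter, Finset.inter_eq_right.mpr (hsub j hj)]
        _ = ∑ j ∈ W', 3 := Finset.sum_congr rfl hc3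
        _ = 3 * W'.card := by rw [Finset.sum_const, smul_eq_mul, mul_comm]
    constructor
    · intro h
      -- first: W'.card = k
      have hmk : W'.card = k := by
        by_contra hne
        have hlt : W'.card < k := lt_of_le_of_ne hcard hne
        have hzero : ∀ b ∈ Bs, (W'.filter (fun j => b ∈ S j)).card = 0 := by
          intro b hb
          have := h b hb
          have := hsplit b
          omega
        have : (3 : ℕ) * W'.card = 0 := by
          rw [← hsum]; exact Finset.sum_eq_zero hzero
        obtain ⟨b0, hb0⟩ := hBsne
        have h0 := h b0 hb0
        have hs0 := hsplit b0
        omega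
      -- each b is covered exactly once
      have hone : ∀ b ∈ Bs, (W'.filter (fun j => b ∈ S j)).card = 1 := by
        have hle1 : ∀ b ∈ Bs, (W'.filter (fun j => b ∈ S j)).card ≤ 1 := by
          intro b hb
          have := h b hb
          have := hsplit b
          omega
        intro b hb
        by_contra hne
        have hlt : (W'.filter (fun j => b ∈ S j)).card < 1 :=
          lt_of_le_of_ne (hle1 b hb) hne
        have hstrict : ∑ b ∈ Bs, (W'.filter (fun j => b ∈ S j)).card
            < ∑ _b ∈ Bs, 1 :=
          Finset.sum_lt_sum hle1 ⟨b, hb, hlt⟩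
        rw [hsum, Finset.sum_const, smul_eq_mul, mul_one, hB, hmk] at hstrict
        omega
      refine ⟨hmk, ?_, ?_⟩
      · intro j1 hj1 j2 hj2 hne
        rw [Finset.mem_coe] at hj1 hj2
        show Disjoint (S j1) (S j2)
        rw [Finset.disjoint_left]
        intro b hb1 hb2
        have hb : b ∈ Bs := hsub j1 hj1 hb1
        have h2 : 1 < (W'.filter (fun j => b ∈ S j)).card := by
          apply Finset.one_lt_card.mpr
          exact ⟨j1, Finset.mem_filter.mpr ⟨hj1, hb1⟩,
                 j2, Finset.mem_filter.mpr ⟨hj2, hb2⟩, hne⟩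
        rw [hone b hb] at h2
        exact absurd h2 (lt_irrefl 1)
      · apply Finset.Subset.antisymm
        · intro b hb
          obtain ⟨j, hj, hbj⟩ := Finset.mem_biUnion.mp hb
          exact hsub j hj hbj
        · intro b hb
          have h1 := hone b hb
          have : (W'.filter (fun j => b ∈ S j)).Nonempty := by
            rw [← Finset.card_pos, h1]; omega
          obtain ⟨j, hj⟩ := this
          rw [Finset.mem_filter] at hj
          exact Finset.mem_biUnion.mpr ⟨j, hj.1, hj.2⟩
    · rintro ⟨hmk, hdisj, hun⟩ b hb
      -- b is covered exactly once
      have hex : ∃ j ∈ W', b ∈ S j := by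
        rw [← hun] at hb
        exact Finset.mem_biUnion.mp hb
      obtain ⟨j0, hj0, hbj0⟩ := hex
      have hfil : W'.filter (fun j => b ∈ S j) = {j0} := by
        apply Finset.eq_singleton_iff_unique_mem.mpr
        refine ⟨Finset.mem_filter.mpr ⟨hj0, hbj0⟩, ?_⟩
        intro j hj
        rw [Finset.mem_filter] at hj
        by_contra hne
        have := hdisj (Finset.mem_coe.mpr hj.1) (Finset.mem_coe.mpr hj0) hne
        exact (Finset.disjoint_left.mp this hj.2) hbj0
      have h1 : (W'.filter (fun j => b ∈ S j)).card = 1 := by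
        rw [hfil, Finset.card_singleton]
      have := hsplit b
      omega
  refine ⟨main, ?_⟩
  congr 1
  apply Finset.filter_congr
  intro W' hW
  rw [Finset.mem_powerset] at hW
  constructor
  · rintro ⟨hle, hcond⟩
    exact (main W' hW hle).mp hcond
  · rintro ⟨hcard, hd, hu⟩
    exact ⟨hcard.le, (main W' hW hcard.le).mpr ⟨hcard, hd, hu⟩⟩
end
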